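/- Let β ⊆ α be compositions with N = |α|−|β| ≥ 1. Then, as formal power series in the variables x_1, x_2, … with rational coefficients, Σ_{T ∈ SIT(α/β)} F_{comp(Des_{A*}(T))} = Σ_T x^T, where the right-hand sum runs over all fillings T of the cells of the skew diagram α/β with positive integers such that the entries in the cells of column 1 lying in α/β weakly increase from bottom to top and the entries of every row weakly increase from left to right. -/

import Mathlib

open scoped Classical

namespace ImmaculateSkew

/-- `part α i` is the `i`-th part (0-indexed) of the composition `α`, or `0` if out of range. -/
def part (α : List ℕ) (i : ℕ) : ℕ := α.getD i 0

/-- a composition: a list of positive integers -/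
def IsComposition (α : List ℕ) : Prop := ∀ x ∈ α, 0 < x

/-- `β ⊆ α` for compositions -/
def SubComp (β α : List ℕ) : Prop :=
  β.length ≤ α.length ∧ ∀ j < β.length, part β j ≤ part α j

/-- cell `(i, j)` (row `i` from the bottom, column `j`, both 0-indexed) lies in the diagram of `α` -/
def InDiagram (α : List ℕ) (c : ℕ × ℕ) : Prop :=
  c.1 < α.length ∧ c.2 < part α c.1

/-- cell lies in the skew diagram `α/β` -/
def InSkew (α β : List ℕ) (c : ℕ × ℕ) : Prop :=
  InDiagram α c ∧ ¬ InDiagram β c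

/-- the finite set of cells of the skew diagram `α/β` -/
noncomputable def skewCells (α β : List ℕ) : Finset (ℕ × ℕ) :=
  (Finset.range α.length ×ˢ Finset.range (α.sum + 1)).filter (InSkew α β)

/-- `N = |α| - |β|` -/
def skewSize (α β : List ℕ) : ℕ := α.sum - β.sum

/-- a filling of the cells of `α/β` using each entry of `E` exactly once, zero off the diagram -/
structure IsStdOn (α β : List ℕ) (E : Finset ℕ) (T : ℕ × ℕ → ℕ) : Prop where
  zero_off : ∀ c, ¬ InSkew α β c → T c = 0
  mem : ∀ c, InSkew α β c → T c ∈ E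
  inj : ∀ c c', InSkew α β c → InSkew α β c' → T c = T c' → c = c'
  surj : ∀ v ∈ E, ∃ c, InSkew α β c ∧ T c = v

/-- row entries strictly increase left to right -/
def RowsStrict (α β : List ℕ) (T : ℕ × ℕ → ℕ) : Prop :=
  ∀ i j j', j < j' → InSkew α β (i, j) → InSkew α β (i, j') → T (i, j) < T (i, j')

/-- row entries weakly increase left to right -/
def RowsWeak (α β : List ℕ) (T : ℕ × ℕ → ℕ) : Prop :=
  ∀ i j j', j < j' → InSkew α β (i, j) → InSkew α β (i, j') → T (i, j) ≤ T (i, j')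

/-- all column entries strictly increase bottom to top -/
def ColsStrict (α β : List ℕ) (T : ℕ × ℕ → ℕ) : Prop :=
  ∀ i i' j, i < i' → InSkew α β (i, j) → InSkew α β (i', j) → T (i, j) < T (i', j)

/-- all column entries weakly increase bottom to top -/
def ColsWeak (α β : List ℕ) (T : ℕ × ℕ → ℕ) : Prop :=
  ∀ i i' j, i < i' → InSkew α β (i, j) → InSkew α β (i', j) → T (i, j) ≤ T (i', j)

/-- the column-1 entries (those in `α/β`) strictly increase bottom to top -/
def FirstColStrict (α β : List ℕ) (T : ℕ × ℕ → ℕ) : Prop :=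
  ∀ i i', i < i' → InSkew α β (i, 0) → InSkew α β (i', 0) → T (i, 0) < T (i', 0)

/-- the column-1 entries (those in `α/β`) weakly increase bottom to top -/
def FirstColWeak (α β : List ℕ) (T : ℕ × ℕ → ℕ) : Prop :=
  ∀ i i', i < i' → InSkew α β (i, 0) → InSkew α β (i', 0) → T (i, 0) ≤ T (i', 0)

/-- standard immaculate tableau of shape `α/β` with entry set `E` -/
def IsSITOn (α β : List ℕ) (E : Finset ℕ) (T : ℕ × ℕ → ℕ) : Prop :=
  IsStdOn α β E T ∧ RowsStrict α β T ∧ FirstColStrict α β T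

/-- standard immaculate tableau of shape `α/β` (entries `1, …, N`) -/
def IsSIT (α β : List ℕ) (T : ℕ × ℕ → ℕ) : Prop :=
  IsSITOn α β (Finset.Icc 1 (skewSize α β)) T

/-- standard extended tableau: all columns increase bottom to top -/
def IsSET (α β : List ℕ) (T : ℕ × ℕ → ℕ) : Prop :=
  IsSIT α β T ∧ ColsStrict α β T

/-- the four descent-set variants -/
inductive Variant | dI | rdI | Astar | Abar

/-- `rowRel a r r'`: the relation required between the row `r` containing `i` and the row `r'`
containing `i+1` for `i` to be an `a`-descent -/
def rowRel : Variant → ℕ → ℕ → Prop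
  | .dI    => fun r r' => r < r'
  | .rdI   => fun r r' => r' ≤ r
  | .Astar => fun r r' => r' < r
  | .Abar  => fun r r' => r ≤ r'

/-- the `a`-descent set of a tableau -/
noncomputable def Des (a : Variant) (α β : List ℕ) (T : ℕ × ℕ → ℕ) : Finset ℕ :=
  (Finset.Icc 1 (skewSize α β - 1)).filter fun k =>
    ∃ c c', InSkew α β c ∧ InSkew α β c' ∧ T c = k ∧ T c' = k + 1 ∧ rowRel a c.1 c'.1

/-- interchange the entries `i` and `i+1` -/
def swapEntries (i : ℕ) (T : ℕ × ℕ → ℕ) : ℕ × ℕ → ℕ :=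
  fun c => if T c = i then i + 1 else if T c = i + 1 then i else T c

/-- the 0-Hecke operator `π_i^a` on `SIT(α/β) ∪ {0}` (the zero function plays the role of `0`) -/
noncomputable def piOp (a : Variant) (α β : List ℕ) (i : ℕ) (T : ℕ × ℕ → ℕ) : ℕ × ℕ → ℕ :=
  if i ∈ Des a α β T then
    (if IsSIT α β (swapEntries i T) then swapEntries i T else fun _ => 0)
  else T

/-- the fundamental quasisymmetric function `F_{comp(D)}` for `D ⊆ {1,…,N-1}`, as a power
series in the variables `x_1, x_2, …` (variable `x_n` is `X n`; `x_0` is unused) -/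
noncomputable def Fund (N : ℕ) (D : Finset ℕ) : MvPowerSeries ℕ ℚ :=
  fun d => (Nat.card {f : Fin N → ℕ //
    (∀ j, 1 ≤ f j) ∧
    (∀ j k : Fin N, j ≤ k → f j ≤ f k) ∧
    (∀ (j : ℕ) (_ : 1 ≤ j) (h2 : j < N), j ∈ D → f ⟨j - 1, by omega⟩ < f ⟨j, h2⟩) ∧
    (∑ j, Finsupp.single (f j) 1) = d} : ℚ)

/-- the generating function `Σ_T x^T` over all fillings of the given cells with positive
integers satisfying the predicate `P` (and equal to `0` off the given cells) -/
noncomputable def genF (cs : Finset (ℕ × ℕ)) (P : (ℕ × ℕ → ℕ) → Prop) :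
    MvPowerSeries ℕ ℚ :=
  fun d => (Nat.card {T : ℕ × ℕ → ℕ //
    (∀ c, c ∉ cs → T c = 0) ∧ (∀ c ∈ cs, 1 ≤ T c) ∧ P T ∧
    (∑ c ∈ cs, Finsupp.single (T c) 1) = d} : ℚ)

/-- complete homogeneous symmetric function `h_r` -/
noncomputable def hFun (r : ℕ) : MvPowerSeries ℕ ℚ :=
  fun d => (Nat.card {f : Fin r → ℕ //
    (∀ j, 1 ≤ f j) ∧ (∀ j k : Fin r, j ≤ k → f j ≤ f k) ∧
    (∑ j, Finsupp.single (f j) 1) = d} : ℚ)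

/-- elementary symmetric function `e_r` -/
noncomputable def eFun (r : ℕ) : MvPowerSeries ℕ ℚ :=
  fun d => (Nat.card {f : Fin r → ℕ //
    (∀ j, 1 ≤ f j) ∧ (∀ j k : Fin r, j < k → f j < f k) ∧
    (∑ j, Finsupp.single (f j) 1) = d} : ℚ)

/-- send a filling to the corresponding basis vector of the free `ℚ`-vector space on
`SIT(α/β)`, or to the zero vector if it is not a standard immaculate tableau -/
noncomputable def toBasis (α β : List ℕ) (U : ℕ × ℕ → ℕ) :
    ({T : ℕ × ℕ → ℕ // IsSIT α β T} →₀ ℚ) :=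
  if h : IsSIT α β U then Finsupp.single ⟨U, h⟩ 1 else 0

/-- the linear extension of `π_i^a` to the free `ℚ`-vector space on `SIT(α/β)` -/
noncomputable def piLin (a : Variant) (α β : List ℕ) (i : ℕ) :
    ({T : ℕ × ℕ → ℕ // IsSIT α β T} →₀ ℚ) →ₗ[ℚ]
      ({T : ℕ × ℕ → ℕ // IsSIT α β T} →₀ ℚ) :=
  Finsupp.lift _ ℚ _ (fun T => toBasis α β (piOp a α β i T.1))

/-- one step: the tableau `T` is obtained from `S` by applying one operator `π_i^a` -/
def stepRel (a : Variant) (α β : List ℕ) (S T : ℕ × ℕ → ℕ) : Prop :=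
  IsSIT α β T ∧ ∃ i, 1 ≤ i ∧ i ≤ skewSize α β - 1 ∧ piOp a α β i S = T

/-- `T` is obtained from `S` by applying a (possibly empty) sequence of operators `π_i^a`,
all intermediate results being tableaux -/
def reach (a : Variant) (α β : List ℕ) : (ℕ × ℕ → ℕ) → (ℕ × ℕ → ℕ) → Prop :=
  Relation.ReflTransGen (stepRel a α β)

/-- the number of skew cells of `α/β` strictly above row `i` other than column-1 cells -/
noncomputable def aboveCount (α β : List ℕ) (i : ℕ) : ℕ :=
  ∑ i' ∈ Finset.Ico (i + 1) α.length,
    (if i' < β.length then part α i' - part β i' else part α i' - 1)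

/-- the tableau `S^0_{α/β}`: the column-1 cells of `α/β` are filled with `1, …, ℓ(α)-ℓ(β)`
bottom to top, then the remaining cells are filled row by row, top to bottom, left to right,
with consecutive integers -/
noncomputable def S0 (α β : List ℕ) : ℕ × ℕ → ℕ :=
  fun c =>
    if InSkew α β c then
      if c.2 = 0 ∧ β.length ≤ c.1 then c.1 - β.length + 1
      else (α.length - β.length) + aboveCount α β c.1 +
        (if c.1 < β.length then c.2 - part β c.1 + 1 else c.2)
    else 0

/-- the row superstandard tableau `S^{row}_{α/β}`: rows filled left to right with `1, 2, …, N`,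
bottom row first -/
noncomputable def Srow (α β : List ℕ) : ℕ × ℕ → ℕ :=
  fun c =>
    if InSkew α β c then
      (∑ i' ∈ Finset.range c.1, (part α i' - part β i')) + (c.2 - part β c.1 + 1)
    else 0

/-- `c` is read before `c'` in the reading word (rows top to bottom, right to left in a row) -/
def readBefore (c c' : ℕ × ℕ) : Prop :=
  c'.1 < c.1 ∨ (c.1 = c'.1 ∧ c'.2 < c.2)

/-- the number of inversions of the reading word of a tableau of shape `α/β` -/
noncomputable def invNum (α β : List ℕ) (T : ℕ × ℕ → ℕ) : ℕ :=
  ((skewCells α β ×ˢ skewCells α β).filter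
    (fun p => readBefore p.1 p.2 ∧ T p.2 < T p.1)).card

/-- `φ_U(T)`: fill the cells of `β` by `U` and those of `α/β` by `T` with all entries of `T`
shifted up by `m = |β|` -/
noncomputable def phiU (α β : List ℕ) (U T : ℕ × ℕ → ℕ) : ℕ × ℕ → ℕ :=
  fun c => if InDiagram β c then U c else if InSkew α β c then T c + β.sum else 0

/-- restriction `T_{≤ m}` of `T` to entries `≤ m` -/
def restrLe (m : ℕ) (T : ℕ × ℕ → ℕ) : ℕ × ℕ → ℕ :=
  fun c => if T c ≤ m then T c else 0

/-- restriction `T_{> m}` of `T` to entries `> m` -/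
def restrGt (m : ℕ) (T : ℕ × ℕ → ℕ) : ℕ × ℕ → ℕ :=
  fun c => if m < T c then T c else 0

/-- standardisation `std(T_{>m})`: keep the entries `> m` and subtract `m` from each -/
def stdGt (m : ℕ) (T : ℕ × ℕ → ℕ) : ℕ × ℕ → ℕ :=
  fun c => if m < T c then T c - m else 0

/-- `T ∈ X_{α,β}`: `T ∈ SIT(α)` and the entries `> |β|` of `T` occupy exactly the cells
of `α/β` -/
def memX (α β : List ℕ) (T : ℕ × ℕ → ℕ) : Prop :=
  IsSIT α [] T ∧ ∀ c, InDiagram α c → (β.sum < T c ↔ ¬ InDiagram β c)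

lemma part_le_sum (γ : List ℕ) (i : ℕ) : part γ i ≤ γ.sum := by
  unfold part
  rcases lt_or_ge i γ.length with h | h
  · rw [List.getD_eq_getElem _ _ h]
    exact List.le_sum_of_mem (List.getElem_mem h)
  · rw [List.getD_eq_default _ _ h]; exact Nat.zero_le _

lemma mem_skewCells {α β : List ℕ} {c : ℕ × ℕ} :
    c ∈ skewCells α β ↔ InSkew α β c := by
  simp only [skewCells, Finset.mem_filter, Finset.mem_product, Finset.mem_range,
    and_iff_right_iff_imp]
  intro h
  exact ⟨h.1.1, lt_of_lt_of_le h.1.2 (le_trans (part_le_sum α c.1) (Nat.le_succ _))⟩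

lemma sum_parts (γ : List ℕ) : ∑ i ∈ Finset.range γ.length, part γ i = γ.sum := by
  induction γ with
  | nil => simp
  | cons a l ih =>
    rw [List.length_cons, Finset.sum_range_succ' (fun i => part (a :: l) i)]
    have h1 : ∀ i ∈ Finset.range l.length, part (a :: l) (i + 1) = part l i := by
      intro i _; simp [part]
    rw [Finset.sum_congr rfl h1, ih]
    simp [part]
    omega

lemma card_diag_filter (α γ : List ℕ) (hlen : γ.length ≤ α.length)
    (hpart : ∀ i, part γ i ≤ α.sum) :
    ((Finset.range α.length ×ˢ Finset.range (α.sum + 1)).filter (InDiagram γ)).card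
      = γ.sum := by
  have : ((Finset.range α.length ×ˢ Finset.range (α.sum + 1)).filter (InDiagram γ))
      = (Finset.range γ.length).biUnion (fun i => {i} ×ˢ Finset.range (part γ i)) := by
    ext ⟨i, j⟩
    simp only [Finset.mem_filter, Finset.mem_product, Finset.mem_range, InDiagram,
      Finset.mem_biUnion, Finset.mem_singleton]
    constructor
    · rintro ⟨⟨h1, h2⟩, h3, h4⟩; exact ⟨i, h3, rfl, h4⟩
    · rintro ⟨i', hi', rfl, hj⟩
      exact ⟨⟨lt_of_lt_of_le hi' hlen, lt_of_lt_of_le hj (le_trans (hpart i) (Nat.le_succ _))⟩,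
        hi', hj⟩
  rw [this, Finset.card_biUnion]
  · simp only [Finset.card_product, Finset.card_singleton, Finset.card_range, one_mul]
    exact sum_parts γ
  · intro x hx y hy hxy
    simp only [Finset.disjoint_left, Finset.mem_product, Finset.mem_singleton]
    rintro ⟨a, b⟩ ⟨rfl, -⟩ ⟨rfl, -⟩
    exact hxy rfl

lemma card_skewCells (α β : List ℕ) (hsub : SubComp β α) (hβα : β.sum ≤ α.sum) :
    (skewCells α β).card = skewSize α β := by
  classical
  let A := (Finset.range α.length ×ˢ Finset.range (α.sum + 1))
  have hsubset : A.filter (InDiagram β) ⊆ A.filter (InDiagram α) := by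
    intro c hc
    simp only [A, Finset.mem_filter] at hc ⊢
    exact ⟨hc.1, lt_of_lt_of_le hc.2.1 hsub.1, lt_of_lt_of_le hc.2.2 (hsub.2 c.1 hc.2.1)⟩
  have hsd : skewCells α β = A.filter (InDiagram α) \ A.filter (InDiagram β) := by
    ext c
    simp only [A, skewCells, InSkew, Finset.mem_filter, Finset.mem_sdiff]
    tauto
  have hβpart : ∀ i, part β i ≤ α.sum := fun i => le_trans (part_le_sum β i) hβα
  rw [hsd, Finset.card_sdiff_of_subset hsubset,
    card_diag_filter α α le_rfl (part_le_sum α),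
    card_diag_filter α β hsub.1 hβpart]
  rfl


lemma sum_le_of_subcomp {α β : List ℕ} (hsub : SubComp β α) : β.sum ≤ α.sum := by
  calc β.sum = ∑ i ∈ Finset.range β.length, part β i := (sum_parts β).symm
    _ ≤ ∑ i ∈ Finset.range β.length, part α i := by
        refine Finset.sum_le_sum fun i hi => hsub.2 i (Finset.mem_range.1 hi)
    _ ≤ ∑ i ∈ Finset.range α.length, part α i := by
        refine Finset.sum_le_sum_of_subset ?_
        exact Finset.range_subset_range.2 hsub.1
    _ = α.sum := sum_parts α

lemma IsSIT.mem_Icc {α β : List ℕ} {T : ℕ × ℕ → ℕ} (hT : IsSIT α β T) {c : ℕ × ℕ}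
    (hc : InSkew α β c) : 1 ≤ T c ∧ T c ≤ skewSize α β := by
  have := hT.1.mem c hc
  rwa [Finset.mem_Icc] at this

lemma finite_SIT (α β : List ℕ) : {T : ℕ × ℕ → ℕ | IsSIT α β T}.Finite := by
  classical
  let N := skewSize α β
  have : Function.Injective
      (fun (T : {T : ℕ × ℕ → ℕ | IsSIT α β T}) =>
        (fun c : {c : ℕ × ℕ // c ∈ skewCells α β} => (⟨T.1 c.1, by
          have := (T.2.1.mem c.1 (mem_skewCells.1 c.2))
          rw [Finset.mem_Icc] at this
          omega⟩ : Fin (N + 1)))) := by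
    intro T U h
    ext c
    by_cases hc : InSkew α β c
    · have := congrFun h ⟨c, mem_skewCells.2 hc⟩
      simpa [Fin.ext_iff] using this
    · rw [T.2.1.zero_off c hc, U.2.1.zero_off c hc]
  have : Finite {T : ℕ × ℕ → ℕ | IsSIT α β T} := Finite.of_injective _ this
  exact Set.toFinite _

/-- reindex a sum over skew cells through a SIT -/
lemma sum_cells_eq {M : Type*} [AddCommMonoid M] {α β : List ℕ} {T : ℕ × ℕ → ℕ}
    (hT : IsSIT α β T) (g : ℕ → M) :
    ∑ c ∈ skewCells α β, g (T c) = ∑ v ∈ Finset.Icc 1 (skewSize α β), g v := by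
  refine Finset.sum_bij (fun c _ => T c) ?_ ?_ ?_ ?_
  · intro c hc; exact hT.1.mem c (mem_skewCells.1 hc)
  · intro c hc c' hc' h
    exact hT.1.inj c c' (mem_skewCells.1 hc) (mem_skewCells.1 hc') h
  · intro v hv
    obtain ⟨c, hc, hcv⟩ := hT.1.surj v hv
    exact ⟨c, mem_skewCells.2 hc, hcv⟩
  · intro c hc; rfl


/-- extend a `Fin N`-indexed family to `ℕ` -/
noncomputable def ext (N : ℕ) (f : Fin N → ℕ) : ℕ → ℕ :=
  fun k => if h : k < N then f ⟨k, h⟩ else 0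

/-- the forward map: fill cell `c` with the value attached to its label -/
noncomputable def fwd (α β : List ℕ) (T : ℕ × ℕ → ℕ) (g : ℕ → ℕ) : ℕ × ℕ → ℕ :=
  fun c => if InSkew α β c then g (T c - 1) else 0

section Core

variable {α β : List ℕ} {T : ℕ × ℕ → ℕ} {N : ℕ}

lemma ext_mono {f : Fin N → ℕ} (hmono : ∀ j k : Fin N, j ≤ k → f j ≤ f k)
    {a b : ℕ} (hab : a ≤ b) (hb : b < N) : ext N f a ≤ ext N f b := by
  have ha : a < N := lt_of_le_of_lt hab hb
  simp only [ext, dif_pos ha, dif_pos hb]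
  exact hmono _ _ hab

lemma fwd_apply_mem (hc : InSkew α β c) (g : ℕ → ℕ) :
    fwd α β T g c = g (T c - 1) := if_pos hc

lemma fwd_weight (hT : IsSIT α β T) (hN : skewSize α β = N) (f : Fin N → ℕ) :
    ∑ c ∈ skewCells α β, Finsupp.single (fwd α β T (ext N f) c) 1
      = ∑ j : Fin N, Finsupp.single (f j) 1 := by
  have h1 : ∀ c ∈ skewCells α β,
      Finsupp.single (fwd α β T (ext N f) c) (1:ℕ)
        = Finsupp.single (ext N f (T c - 1)) 1 := by
    intro c hc; rw [fwd_apply_mem (mem_skewCells.1 hc)]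
  rw [Finset.sum_congr rfl h1,
    sum_cells_eq hT (fun v => Finsupp.single (ext N f (v - 1)) 1), hN]
  have h2 : Finset.Icc 1 N = Finset.Ico 1 (N + 1) := by
    rw [Finset.Ico_add_one_right_eq_Icc]
  rw [h2, Finset.sum_Ico_eq_sum_range]
  simp only [Nat.add_sub_cancel]
  rw [Finset.sum_range fun i => Finsupp.single (ext N f (1 + i - 1)) (1:ℕ)]
  refine Finset.sum_congr rfl fun j _ => ?_
  have : (1 + (j:ℕ) - 1) = (j:ℕ) := by omega
  rw [this]
  simp [ext, j.isLt]

/-- the key chain lemma: if the values attached to labels `k ≤ k'` agree, the row of the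
cell labelled `k` is at most the row of the cell labelled `k'` -/
lemma row_mono_of_const (hT : IsSIT α β T) (hN : skewSize α β = N)
    {f : Fin N → ℕ}
    (hmono : ∀ j k : Fin N, j ≤ k → f j ≤ f k)
    (hdes : ∀ (j : ℕ) (_ : 1 ≤ j) (h2 : j < N), j ∈ Des .Astar α β T →
      f ⟨j - 1, by omega⟩ < f ⟨j, h2⟩) :
    ∀ (m k : ℕ) (c c' : ℕ × ℕ), 1 ≤ k → k + m ≤ N →
      ext N f (k - 1) = ext N f (k + m - 1) →
      InSkew α β c → InSkew α β c' → T c = k → T c' = k + m → c.1 ≤ c'.1 := by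
  intro m
  induction m with
  | zero =>
    intro k c c' _ _ _ hc hc' hk hk'
    have : c = c' := hT.1.inj c c' hc hc' (by omega)
    exact this ▸ le_refl _
  | succ m ih =>
    intro k c c' hk1 hkm hconst hc hc' hTc hTc'
    -- the cell labelled k + m
    have hkmN : k + m ∈ Finset.Icc 1 N := by
      rw [Finset.mem_Icc]; omega
    obtain ⟨c'', hc'', hTc''⟩ := hT.1.surj (k + m) (by rw [← hN] at hkmN; exact hkmN)
    have hmid : ext N f (k - 1) = ext N f (k + m - 1) := by
      have h1 : ext N f (k - 1) ≤ ext N f (k + m - 1) :=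
        ext_mono hmono (by omega) (by omega)
      have h2 : ext N f (k + m - 1) ≤ ext N f (k + (m+1) - 1) :=
        ext_mono hmono (by omega) (by omega)
      omega
    have hrow : c.1 ≤ c''.1 := ih k c c'' hk1 (by omega) hmid hc hc'' hTc hTc''
    -- now show c''.1 ≤ c'.1
    by_contra hlt
    have hcc' : c''.1 ≤ c'.1 → False := by omega
    have hdesc : (k + m) ∈ Des .Astar α β T := by
      simp only [Des, Finset.mem_filter, Finset.mem_Icc]
      refine ⟨⟨by omega, by omega⟩, c'', c', hc'', hc', hTc'', by omega, ?_⟩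
      simp only [rowRel]
      omega
    have hp1 : k + m - 1 < N := by omega
    have hp2 : k + m < N := by omega
    have hstrict : f ⟨k + m - 1, hp1⟩ < f ⟨k + m, hp2⟩ :=
      hdes (k + m) (by omega) hp2 hdesc
    have he1 : ext N f (k + m - 1) = f ⟨k + m - 1, hp1⟩ := by
      simp only [ext]; rw [dif_pos hp1]
    have he2 : ext N f (k + (m + 1) - 1) = f ⟨k + m, hp2⟩ := by
      have hkk : k + (m + 1) - 1 = k + m := by omega
      rw [hkk]; simp only [ext]; rw [dif_pos hp2]
    have hle : ext N f (k - 1) ≤ ext N f (k + m - 1) :=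
      ext_mono hmono (by omega) (by omega)
    have hcon : ext N f (k - 1) < ext N f (k + (m + 1) - 1) := by
      refine lt_of_le_of_lt hle ?_
      rw [he1, he2]
      exact hstrict
    omega

/-- lexicographic order on cells: lower row first, then smaller column -/
def lexlt (c c' : ℕ × ℕ) : Prop := c.1 < c'.1 ∨ (c.1 = c'.1 ∧ c.2 < c'.2)

lemma ext_eq {N : ℕ} (f : Fin N → ℕ) {k : ℕ} (h : k < N) : ext N f k = f ⟨k, h⟩ := by
  simp only [ext]; rw [dif_pos h]

/-- the key order lemma: labels increase along the tie-broken value order -/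
lemma fwd_order {α β : List ℕ} {T : ℕ × ℕ → ℕ} {N : ℕ} (hT : IsSIT α β T)
    (hN : skewSize α β = N) {f : Fin N → ℕ}
    (hmono : ∀ j k : Fin N, j ≤ k → f j ≤ f k)
    (hdes : ∀ (j : ℕ) (_ : 1 ≤ j) (h2 : j < N), j ∈ Des .Astar α β T →
      f ⟨j - 1, by omega⟩ < f ⟨j, h2⟩)
    {c c' : ℕ × ℕ} (hc : InSkew α β c) (hc' : InSkew α β c') (hlt : T c < T c') :
    fwd α β T (ext N f) c < fwd α β T (ext N f) c' ∨
      (fwd α β T (ext N f) c = fwd α β T (ext N f) c' ∧ lexlt c c') := by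
  have hb := hT.mem_Icc hc
  have hb' := hT.mem_Icc hc'
  rw [hN] at hb hb'
  rw [fwd_apply_mem hc, fwd_apply_mem hc']
  have hle : ext N f (T c - 1) ≤ ext N f (T c' - 1) :=
    ext_mono hmono (by omega) (by omega)
  rcases lt_or_eq_of_le hle with h | h
  · exact Or.inl h
  · right
    refine ⟨h, ?_⟩
    have hrow : c.1 ≤ c'.1 := by
      have hconst : ext N f (T c - 1) = ext N f (T c + (T c' - T c) - 1) := by
        have : T c + (T c' - T c) = T c' := by omega
        rw [this, h]
      exact row_mono_of_const hT hN hmono hdes (T c' - T c) (T c) c c' (by omega)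
        (by omega) hconst hc hc' rfl (by omega)
    rcases lt_or_eq_of_le hrow with hr | hr
    · exact Or.inl hr
    · refine Or.inr ⟨hr, ?_⟩
      rcases lt_trichotomy c.2 c'.2 with h2 | h2 | h2
      · exact h2
      · exfalso
        have hcc : c = c' := Prod.ext hr h2
        rw [hcc] at hlt
        omega
      · exfalso
        have hcc : c = (c.1, c.2) := rfl
        have hcc' : c' = (c.1, c'.2) := by
          rw [hr]
        have := hT.2.1 c.1 c'.2 c.2 h2 (by rw [← hcc']; exact hc') (by rw [← hcc]; exact hc)
        rw [← hcc, ← hcc'] at this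
        omega

/-- rank formula for a standard immaculate tableau -/
lemma rank_card {α β : List ℕ} {T : ℕ × ℕ → ℕ} (hT : IsSIT α β T)
    {c : ℕ × ℕ} (hc : InSkew α β c) :
    ((skewCells α β).filter fun c' => T c' < T c).card = T c - 1 := by
  have hb := hT.mem_Icc hc
  have : ((skewCells α β).filter fun c' => T c' < T c).card
      = (Finset.Ico 1 (T c)).card := by
    refine Finset.card_bij (fun c' _ => T c') ?_ ?_ ?_
    · intro a ha
      rw [Finset.mem_filter] at ha
      have := hT.mem_Icc (mem_skewCells.1 ha.1)
      rw [Finset.mem_Ico]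
      exact ⟨this.1, ha.2⟩
    · intro a ha b hb hab
      rw [Finset.mem_filter] at ha hb
      exact hT.1.inj a b (mem_skewCells.1 ha.1) (mem_skewCells.1 hb.1) hab
    · intro v hv
      rw [Finset.mem_Ico] at hv
      obtain ⟨a, ha, hav⟩ := hT.1.surj v (by rw [Finset.mem_Icc]; omega)
      refine ⟨a, ?_, hav⟩
      rw [Finset.mem_filter]
      exact ⟨mem_skewCells.2 ha, by omega⟩
  rw [this, Nat.card_Ico]

/-- the tie-broken value order on fillings -/
def ordW (W : ℕ × ℕ → ℕ) (a b : ℕ × ℕ) : Prop :=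
  W a < W b ∨ (W a = W b ∧ lexlt a b)

lemma ordW_iff {α β : List ℕ} {T : ℕ × ℕ → ℕ} {N : ℕ} (hT : IsSIT α β T)
    (hN : skewSize α β = N) {f : Fin N → ℕ}
    (hmono : ∀ j k : Fin N, j ≤ k → f j ≤ f k)
    (hdes : ∀ (j : ℕ) (_ : 1 ≤ j) (h2 : j < N), j ∈ Des .Astar α β T →
      f ⟨j - 1, by omega⟩ < f ⟨j, h2⟩)
    {c c' : ℕ × ℕ} (hc : InSkew α β c) (hc' : InSkew α β c') :
    ordW (fwd α β T (ext N f)) c c' ↔ T c < T c' := by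
  constructor
  · intro hord
    rcases lt_trichotomy (T c) (T c') with h | h | h
    · exact h
    · exfalso
      have : c = c' := hT.1.inj c c' hc hc' h
      subst this
      rcases hord with h1 | ⟨h1, h2⟩
      · omega
      · rcases h2 with h3 | ⟨h3, h4⟩ <;> omega
    · exfalso
      have := fwd_order hT hN hmono hdes hc' hc h
      rcases this with h1 | ⟨h1, h2⟩ <;> rcases hord with h3 | ⟨h3, h4⟩
      · omega
      · omega
      · omega
      · rcases h2 with h5 | ⟨h5, h6⟩ <;> rcases h4 with h7 | ⟨h7, h8⟩ <;> omega
  · intro h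
    rcases fwd_order hT hN hmono hdes hc hc' h with h1 | ⟨h1, h2⟩
    · exact Or.inl h1
    · exact Or.inr ⟨h1, h2⟩

/-- the label of a cell is its rank in the tie-broken value order -/
lemma rank_formula {α β : List ℕ} {T : ℕ × ℕ → ℕ} {N : ℕ} (hT : IsSIT α β T)
    (hN : skewSize α β = N) {f : Fin N → ℕ}
    (hmono : ∀ j k : Fin N, j ≤ k → f j ≤ f k)
    (hdes : ∀ (j : ℕ) (_ : 1 ≤ j) (h2 : j < N), j ∈ Des .Astar α β T →
      f ⟨j - 1, by omega⟩ < f ⟨j, h2⟩)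
    {c : ℕ × ℕ} (hc : InSkew α β c) :
    T c = ((skewCells α β).filter fun c' => ordW (fwd α β T (ext N f)) c' c).card + 1 := by
  have hfe : ((skewCells α β).filter fun c' => ordW (fwd α β T (ext N f)) c' c)
      = ((skewCells α β).filter fun c' => T c' < T c) := by
    refine Finset.filter_congr fun c' hc' => ?_
    exact_mod_cast ordW_iff hT hN hmono hdes (mem_skewCells.1 hc') hc
  rw [hfe, rank_card hT hc]
  have := hT.mem_Icc hc
  omega

/-- injectivity of the forward map -/
lemma fwd_inj {α β : List ℕ} {T T' : ℕ × ℕ → ℕ} {N : ℕ}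
    (hT : IsSIT α β T) (hT' : IsSIT α β T') (hN : skewSize α β = N)
    {f f' : Fin N → ℕ}
    (hmono : ∀ j k : Fin N, j ≤ k → f j ≤ f k)
    (hdes : ∀ (j : ℕ) (_ : 1 ≤ j) (h2 : j < N), j ∈ Des .Astar α β T →
      f ⟨j - 1, by omega⟩ < f ⟨j, h2⟩)
    (hmono' : ∀ j k : Fin N, j ≤ k → f' j ≤ f' k)
    (hdes' : ∀ (j : ℕ) (_ : 1 ≤ j) (h2 : j < N), j ∈ Des .Astar α β T' →
      f' ⟨j - 1, by omega⟩ < f' ⟨j, h2⟩)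
    (heq : fwd α β T (ext N f) = fwd α β T' (ext N f')) :
    T = T' ∧ f = f' := by
  have hTT : T = T' := by
    funext c
    by_cases hc : InSkew α β c
    · rw [rank_formula hT hN hmono hdes hc, rank_formula hT' hN hmono' hdes' hc, heq]
    · rw [hT.1.zero_off c hc, hT'.1.zero_off c hc]
  subst hTT
  refine ⟨rfl, ?_⟩
  funext j
  have hj : (j : ℕ) + 1 ∈ Finset.Icc 1 (skewSize α β) := by
    rw [Finset.mem_Icc]
    have := j.isLt
    omega
  obtain ⟨c, hc, hcv⟩ := hT.1.surj ((j : ℕ) + 1) hj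
  have h1 := congrFun heq c
  rw [fwd_apply_mem hc, fwd_apply_mem hc] at h1
  have hj2 : T c - 1 = (j : ℕ) := by omega
  rw [hj2, ext_eq f j.isLt, ext_eq f' j.isLt] at h1
  simpa using h1

lemma fwd_isB {α β : List ℕ} {T : ℕ × ℕ → ℕ} {N : ℕ} (hT : IsSIT α β T)
    (hN : skewSize α β = N) {f : Fin N → ℕ} (hpos : ∀ j, 1 ≤ f j)
    (hmono : ∀ j k : Fin N, j ≤ k → f j ≤ f k) :
    (∀ c, ¬ InSkew α β c → fwd α β T (ext N f) c = 0) ∧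
    (∀ c, InSkew α β c → 1 ≤ fwd α β T (ext N f) c) ∧
    FirstColWeak α β (fwd α β T (ext N f)) ∧ RowsWeak α β (fwd α β T (ext N f)) := by
  refine ⟨fun c hc => if_neg hc, ?_, ?_, ?_⟩
  · intro c hc
    have hb := hT.mem_Icc hc
    rw [hN] at hb
    rw [fwd_apply_mem hc, ext_eq f (show T c - 1 < N by omega)]
    exact hpos _
  · intro i i' hii hc hc'
    have h := hT.2.2 i i' hii hc hc'
    have hb := hT.mem_Icc hc
    have hb' := hT.mem_Icc hc'
    rw [hN] at hb hb'
    rw [fwd_apply_mem hc, fwd_apply_mem hc']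
    exact ext_mono hmono (by omega) (by omega)
  · intro i j j' hjj hc hc'
    have h := hT.2.1 i j j' hjj hc hc'
    have hb := hT.mem_Icc hc
    have hb' := hT.mem_Icc hc'
    rw [hN] at hb hb'
    rw [fwd_apply_mem hc, fwd_apply_mem hc']
    exact ext_mono hmono (by omega) (by omega)

/-- the standardisation construction: surjectivity of the forward map -/
lemma fwd_surj {α β : List ℕ} {N : ℕ} (hsub : SubComp β α)
    (hN : skewSize α β = N) (hN1 : 1 ≤ N) {W : ℕ × ℕ → ℕ}
    (hW0 : ∀ c, ¬ InSkew α β c → W c = 0) (hW1 : ∀ c, InSkew α β c → 1 ≤ W c)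
    (hcol : FirstColWeak α β W) (hrow : RowsWeak α β W) :
    ∃ (T : ℕ × ℕ → ℕ) (f : Fin N → ℕ), IsSIT α β T ∧ (∀ j, 1 ≤ f j) ∧
      (∀ j k : Fin N, j ≤ k → f j ≤ f k) ∧
      (∀ (j : ℕ) (_ : 1 ≤ j) (h2 : j < N), j ∈ Des .Astar α β T →
        f ⟨j - 1, by omega⟩ < f ⟨j, h2⟩) ∧
      fwd α β T (ext N f) = W := by
  classical
  set κ : ℕ × ℕ → Lex (ℕ × Lex (ℕ × ℕ)) :=
    fun c => toLex (W c, toLex (c.1, c.2)) with hκ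
  have κinj : Function.Injective κ := by
    intro c c' h
    simp only [hκ] at h
    have h2 := congrArg ofLex h
    simp only [ofLex_toLex] at h2
    have h3 := congrArg Prod.snd h2
    simp only at h3
    have h4 := congrArg ofLex h3
    simp only [ofLex_toLex] at h4
    exact Prod.ext (congrArg Prod.fst h4) (congrArg Prod.snd h4)
  set s' : Finset (Lex (ℕ × Lex (ℕ × ℕ))) := (skewCells α β).image κ with hs'
  have hcard : s'.card = N := by
    rw [hs', Finset.card_image_of_injective _ κinj,
      card_skewCells α β hsub (sum_le_of_subcomp hsub), hN]
  set e := s'.orderIsoOfFin hcard with he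
  have hmem : ∀ {c : ℕ × ℕ}, c ∈ skewCells α β → κ c ∈ s' := by
    intro c hc
    exact Finset.mem_image_of_mem κ hc
  set T : ℕ × ℕ → ℕ := fun c =>
    if h : c ∈ skewCells α β then ((e.symm ⟨κ c, hmem h⟩ : Fin N) : ℕ) + 1 else 0
    with hT
  set f : Fin N → ℕ := fun j => (ofLex (ofLex ((e j) : Lex (ℕ × Lex (ℕ × ℕ))))).1
    with hf
  have hTval : ∀ {c : ℕ × ℕ} (h : InSkew α β c),
      T c = ((e.symm ⟨κ c, hmem (mem_skewCells.2 h)⟩ : Fin N) : ℕ) + 1 := by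
    intro c h
    simp only [hT]
    rw [dif_pos (mem_skewCells.2 h)]
  have hfval : ∀ {c : ℕ × ℕ} (h : InSkew α β c),
      f (e.symm ⟨κ c, hmem (mem_skewCells.2 h)⟩) = W c := by
    intro c h
    simp only [hf]
    rw [OrderIso.apply_symm_apply]
    rfl
  have hesurj : ∀ (j : Fin N), ∃ c, InSkew α β c ∧ κ c = ((e j : s') : Lex (ℕ × Lex (ℕ × ℕ))) := by
    intro j
    have h2 : ((e j : { x // x ∈ s' }) : Lex (ℕ × Lex (ℕ × ℕ)))
        ∈ Finset.image κ (skewCells α β) := (e j).2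
    obtain ⟨c, hc, hck⟩ := Finset.mem_image.1 h2
    exact ⟨c, mem_skewCells.1 hc, hck⟩
  -- κ comparison
  have hκlt : ∀ {c c' : ℕ × ℕ}, κ c < κ c' ↔
      (W c < W c' ∨ (W c = W c' ∧ (c.1 < c'.1 ∨ (c.1 = c'.1 ∧ c.2 < c'.2)))) := by
    intro c c'
    simp only [hκ]
    rw [Prod.Lex.lt_iff]
    constructor
    · rintro (h | ⟨h1, h2⟩)
      · exact Or.inl h
      · rw [Prod.Lex.lt_iff] at h2
        exact Or.inr ⟨h1, h2⟩
    · rintro (h | ⟨h1, h2⟩)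
      · exact Or.inl h
      · refine Or.inr ⟨h1, ?_⟩
        rw [Prod.Lex.lt_iff]
        exact h2
  have hTlt : ∀ {c c' : ℕ × ℕ} (h : InSkew α β c) (h' : InSkew α β c'),
      κ c < κ c' → T c < T c' := by
    intro c c' h h' hlt
    rw [hTval h, hTval h']
    have : e.symm ⟨κ c, hmem (mem_skewCells.2 h)⟩ < e.symm ⟨κ c', hmem (mem_skewCells.2 h')⟩ := by
      apply e.symm.strictMono
      exact Subtype.mk_lt_mk.2 hlt
    have := Fin.lt_iff_val_lt_val.1 this
    omega
  have hSIT : IsSIT α β T := by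
    refine ⟨⟨?_, ?_, ?_, ?_⟩, ?_, ?_⟩
    · intro c hc
      simp only [hT]
      rw [dif_neg (fun h => hc (mem_skewCells.1 h))]
    · intro c hc
      rw [hTval hc, hN, Finset.mem_Icc]
      have := (e.symm ⟨κ c, hmem (mem_skewCells.2 hc)⟩).isLt
      omega
    · intro c c' hc hc' hcc
      rw [hTval hc, hTval hc'] at hcc
      have h1 : e.symm ⟨κ c, hmem (mem_skewCells.2 hc)⟩
          = e.symm ⟨κ c', hmem (mem_skewCells.2 hc')⟩ := by
        apply Fin.ext
        omega
      have h2 := e.symm.injective h1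
      have h3 : κ c = κ c' := congrArg Subtype.val h2
      exact κinj h3
    · intro v hv
      rw [hN, Finset.mem_Icc] at hv
      obtain ⟨c, hc, hck⟩ := hesurj ⟨v - 1, by omega⟩
      refine ⟨c, hc, ?_⟩
      rw [hTval hc]
      have : (⟨κ c, hmem (mem_skewCells.2 hc)⟩ : {x // x ∈ s'}) = e ⟨v - 1, by omega⟩ :=
        Subtype.ext hck
      rw [this, OrderIso.symm_apply_apply]
      simp only
      omega
    · intro i j j' hjj hc hc'
      refine hTlt hc hc' ?_
      rw [hκlt]
      rcases lt_or_eq_of_le (hrow i j j' hjj hc hc') with h | h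
      · exact Or.inl h
      · exact Or.inr ⟨h, Or.inr ⟨rfl, hjj⟩⟩
    · intro i i' hii hc hc'
      refine hTlt hc hc' ?_
      rw [hκlt]
      rcases lt_or_eq_of_le (hcol i i' hii hc hc') with h | h
      · exact Or.inl h
      · exact Or.inr ⟨h, Or.inl hii⟩
  refine ⟨T, f, hSIT, ?_, ?_, ?_, ?_⟩
  · intro j
    obtain ⟨c, hc, hck⟩ := hesurj j
    have : f j = W c := by
      simp only [hf, ← hck]; rfl
    rw [this]
    exact hW1 c hc
  · intro j k hjk
    have h1 : (e j : Lex (ℕ × Lex (ℕ × ℕ))) ≤ (e k : Lex (ℕ × Lex (ℕ × ℕ))) := by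
      exact Subtype.coe_le_coe.2 (e.monotone hjk)
    obtain ⟨c, hc, hck⟩ := hesurj j
    obtain ⟨c', hc', hck'⟩ := hesurj k
    rw [← hck, ← hck'] at h1
    simp only [hκ] at h1
    rw [Prod.Lex.le_iff] at h1
    have hfj : f j = W c := by simp only [hf, ← hck]; rfl
    have hfk : f k = W c' := by simp only [hf, ← hck']; rfl
    rw [hfj, hfk]
    rcases h1 with h | ⟨h, _⟩
    · exact le_of_lt h
    · exact le_of_eq h
  · intro j hj1 hj2 hdes
    simp only [Des, Finset.mem_filter] at hdes
    obtain ⟨-, c, c', hc, hc', hTc, hTc', hrel⟩ := hdes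
    simp only [rowRel] at hrel
    -- labels
    have hj0 : e.symm ⟨κ c, hmem (mem_skewCells.2 hc)⟩ = ⟨j - 1, by omega⟩ := by
      apply Fin.ext
      have := hTval hc
      simp only
      omega
    have hj1' : e.symm ⟨κ c', hmem (mem_skewCells.2 hc')⟩ = ⟨j, hj2⟩ := by
      apply Fin.ext
      have := hTval hc'
      simp only
      omega
    have hfc : f ⟨j - 1, by omega⟩ = W c := by rw [← hj0]; exact hfval hc
    have hfc' : f ⟨j, hj2⟩ = W c' := by rw [← hj1']; exact hfval hc'
    rw [hfc, hfc']
    have hlt : κ c < κ c' := by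
      have h1 : (⟨j - 1, by omega⟩ : Fin N) < ⟨j, hj2⟩ := by
        rw [Fin.lt_iff_val_lt_val]; simp only; omega
      rw [← hj0, ← hj1'] at h1
      have h2 := e.symm.symm.strictMono h1
      rw [OrderIso.symm_symm] at h2
      have h3 : (e (e.symm ⟨κ c, hmem (mem_skewCells.2 hc)⟩))
          < (e (e.symm ⟨κ c', hmem (mem_skewCells.2 hc')⟩)) := h2
      rw [OrderIso.apply_symm_apply, OrderIso.apply_symm_apply] at h3
      exact Subtype.mk_lt_mk.1 h3
    rw [hκlt] at hlt
    rcases hlt with h | ⟨h1, h2 | ⟨h2, h3⟩⟩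
    · exact h
    · omega
    · omega
  · funext c
    by_cases hc : InSkew α β c
    · rw [fwd_apply_mem hc]
      have hb : T c - 1 < N := by
        rw [hTval hc]
        have := (e.symm ⟨κ c, hmem (mem_skewCells.2 hc)⟩).isLt
        omega
      rw [ext_eq f hb]
      have : (⟨T c - 1, hb⟩ : Fin N) = e.symm ⟨κ c, hmem (mem_skewCells.2 hc)⟩ := by
        apply Fin.ext
        have := hTval hc
        simp only
        omega
      rw [this]
      exact hfval hc
    · rw [show fwd α β T (ext N f) c = 0 from if_neg hc, hW0 c hc]

lemma nat_card_sigma {ι : Type*} [Fintype ι] (g : ι → Type*) [∀ i, Finite (g i)] :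
    Nat.card (Σ i, g i) = ∑ i, Nat.card (g i) := by
  letI := fun i => Fintype.ofFinite (g i)
  simp only [Nat.card_eq_fintype_card]
  exact Fintype.card_sigma

lemma support_of_weight {N : ℕ} {f : Fin N → ℕ} {d : ℕ →₀ ℕ}
    (hw : (∑ j, Finsupp.single (f j) 1) = d) (j : Fin N) : f j ∈ d.support := by
  rw [Finsupp.mem_support_iff, ← hw]
  have h1 : (∑ j', Finsupp.single (f j') (1:ℕ)) (f j)
      = ∑ j', Finsupp.single (f j') (1:ℕ) (f j) := by
    rw [Finsupp.finset_sum_apply]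
  rw [h1]
  have h2 : Finsupp.single (f j) (1:ℕ) (f j) = 1 := by simp
  have h3 : Finsupp.single (f j) (1:ℕ) (f j)
      ≤ ∑ j', Finsupp.single (f j') (1:ℕ) (f j) :=
    Finset.single_le_sum (f := fun j' => Finsupp.single (f j') (1:ℕ) (f j))
      (fun _ _ => Nat.zero_le _) (Finset.mem_univ j)
  omega

lemma finite_A (N : ℕ) (D : Finset ℕ) (d : ℕ →₀ ℕ) :
    Finite {f : Fin N → ℕ //
      (∀ j, 1 ≤ f j) ∧
      (∀ j k : Fin N, j ≤ k → f j ≤ f k) ∧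
      (∀ (j : ℕ) (_ : 1 ≤ j) (h2 : j < N), j ∈ D → f ⟨j - 1, by omega⟩ < f ⟨j, h2⟩) ∧
      (∑ j, Finsupp.single (f j) 1) = d} := by
  refine Finite.of_injective
    (fun f => (fun j => (⟨f.1 j, support_of_weight f.2.2.2.2 j⟩ : {x // x ∈ d.support})
      : Fin N → {x // x ∈ d.support})) ?_
  intro f g h
  apply Subtype.ext
  funext j
  have := congrFun h j
  simpa [Subtype.ext_iff] using this

end Core

/-- `Σ_{T ∈ SIT(α/β)} F_{comp(Des_{A*}(T))}` equals the generating function of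
all fillings of `α/β` with column-1 entries weakly increasing bottom to top and all rows
weakly increasing left to right. -/
theorem skew_Astar_generating_function (α β : List ℕ)
    (hα : IsComposition α) (hβ : IsComposition β) (hsub : SubComp β α)
    (hN : 1 ≤ skewSize α β) :
    (∑ᶠ (T : ℕ × ℕ → ℕ) (_ : IsSIT α β T), Fund (skewSize α β) (Des .Astar α β T)) =
      genF (skewCells α β) (fun T => FirstColWeak α β T ∧ RowsWeak α β T) := by
  classical
  have hfin := finite_SIT α β
  have h1 : (∑ᶠ (T : ℕ × ℕ → ℕ) (_ : IsSIT α β T),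
      Fund (skewSize α β) (Des .Astar α β T))
      = ∑ T ∈ hfin.toFinset, Fund (skewSize α β) (Des .Astar α β T) := by
    rw [← finsum_mem_coe_finset, Set.Finite.coe_toFinset]
    rfl
  rw [h1]
  funext d
  have h2 := Finset.sum_apply d hfin.toFinset
    (fun T => Fund (skewSize α β) (Des .Astar α β T))
  refine h2.trans ?_
  simp only [Fund, genF]
  rw [← Nat.cast_sum]
  congr 1
  -- the natural-number identity
  haveI : ∀ T : {x // x ∈ hfin.toFinset},
      Finite {f : Fin (skewSize α β) → ℕ //
        (∀ j, 1 ≤ f j) ∧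
        (∀ j k : Fin (skewSize α β), j ≤ k → f j ≤ f k) ∧
        (∀ (j : ℕ) (_ : 1 ≤ j) (h2 : j < skewSize α β),
          j ∈ Des .Astar α β T.1 → f ⟨j - 1, by omega⟩ < f ⟨j, h2⟩) ∧
        (∑ j, Finsupp.single (f j) 1) = d} :=
    fun T => finite_A (skewSize α β) (Des .Astar α β T.1) d
  rw [← Finset.sum_coe_sort]
  rw [← nat_card_sigma]
  refine Nat.card_congr (Equiv.ofBijective ?_ ⟨?_, ?_⟩)
  · -- the forward map
    refine fun p => ⟨fwd α β p.1.1 (ext (skewSize α β) p.2.1), ?_, ?_, ?_, ?_⟩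
    · have hS : IsSIT α β p.1.1 := (Set.Finite.mem_toFinset hfin).1 p.1.2
      intro c hc
      exact (fwd_isB hS rfl p.2.2.1 p.2.2.2.1).1 c (fun h => hc (mem_skewCells.2 h))
    · have hS : IsSIT α β p.1.1 := (Set.Finite.mem_toFinset hfin).1 p.1.2
      intro c hc
      exact (fwd_isB hS rfl p.2.2.1 p.2.2.2.1).2.1 c (mem_skewCells.1 hc)
    · have hS : IsSIT α β p.1.1 := (Set.Finite.mem_toFinset hfin).1 p.1.2
      exact (fwd_isB hS rfl p.2.2.1 p.2.2.2.1).2.2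
    · have hS : IsSIT α β p.1.1 := (Set.Finite.mem_toFinset hfin).1 p.1.2
      rw [fwd_weight hS rfl p.2.1]
      exact p.2.2.2.2.2
  · -- injectivity
    rintro ⟨⟨T, hTmem⟩, f, hfp⟩ ⟨⟨T', hTmem'⟩, f', hfp'⟩ h
    have hS : IsSIT α β T := (Set.Finite.mem_toFinset hfin).1 hTmem
    have hS' : IsSIT α β T' := (Set.Finite.mem_toFinset hfin).1 hTmem'
    rw [Subtype.mk.injEq] at h
    obtain ⟨hTT, hff⟩ := fwd_inj hS hS' rfl hfp.2.1 hfp.2.2.1 hfp'.2.1 hfp'.2.2.1 h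
    subst hTT
    subst hff
    rfl
  · -- surjectivity
    rintro ⟨W, hW0, hW1, ⟨hcol, hrow⟩, hWw⟩
    obtain ⟨T, f, hS, hpos, hmono, hdes, hfwd⟩ :=
      fwd_surj hsub rfl hN (fun c hc => hW0 c (fun h => hc (mem_skewCells.1 h)))
        (fun c hc => hW1 c (mem_skewCells.2 hc)) hcol hrow
    have hwt : (∑ j, Finsupp.single (f j) 1) = d := by
      have h3 := fwd_weight hS rfl f
      rw [hfwd] at h3
      rw [← h3]
      exact hWw
    exact ⟨⟨⟨T, (Set.Finite.mem_toFinset hfin).2 hS⟩, ⟨f, hpos, hmono, hdes, hwt⟩⟩,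
      Subtype.ext hfwd⟩


end ImmaculateSkew
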